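/- arXiv:2505.22300 — 3 statements merged into one kernel-verified Lean document; each statement's English description precedes it below -/
import Mathlib

section
/- If H is an ℓ-scorpion with at least ℓ+4 vertices, then the tuple (b, t₁, …, t_ℓ, s) of body, tail, and sting witnessing the ℓ-scorpion structure is unique. -/
/-- `p = (b, t₁, …, t_ℓ, s)` witnesses that `G` is an `ℓ`-scorpion:
the entries of `p` are pairwise distinct and induce the path `b–t₁–⋯–t_ℓ–s`,
the body `b = p 0` is adjacent to all vertices outside the path (the legs),
and no other path vertex is adjacent to a leg. -/
def ScorpionTuple {V : Type*} (G : SimpleGraph V) (ℓ : ℕ) (p : Fin (ℓ + 2) → V) : Prop :=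
  Function.Injective p ∧
  (∀ i j : Fin (ℓ + 2), G.Adj (p i) (p j) ↔ (i.val + 1 = j.val ∨ j.val + 1 = i.val)) ∧
  (∀ v : V, v ∉ Set.range p → G.Adj (p 0) v) ∧
  (∀ i : Fin (ℓ + 2), i ≠ 0 → ∀ v : V, v ∉ Set.range p → ¬ G.Adj (p i) v)

/-- `G` is an `ℓ`-scorpion. -/
def IsScorpion {V : Type*} (G : SimpleGraph V) (ℓ : ℕ) : Prop :=
  ∃ p : Fin (ℓ + 2) → V, ScorpionTuple G ℓ p

/-- Any neighbor of a non-body path vertex is a path vertex at consecutive index. -/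
lemma scorpion_nbr {V : Type*} {G : SimpleGraph V} {ℓ : ℕ} {p : Fin (ℓ + 2) → V}
    (hp : ScorpionTuple G ℓ p) {i : Fin (ℓ + 2)} (hi : i ≠ 0) {v : V}
    (hv : G.Adj (p i) v) :
    ∃ j : Fin (ℓ + 2), v = p j ∧ (j.val + 1 = i.val ∨ i.val + 1 = j.val) := by
  obtain ⟨hpinj, hpadj, hpleg, hpnot⟩ := hp
  by_cases h : v ∈ Set.range p
  · obtain ⟨j, rfl⟩ := h
    exact ⟨j, rfl, ((hpadj i j).mp hv).symm⟩
  · exact absurd hv (hpnot i hi v h)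

/-- A non-body path vertex cannot have three distinct neighbors. -/
lemma scorpion_not_three {V : Type*} {G : SimpleGraph V} {ℓ : ℕ} {p : Fin (ℓ + 2) → V}
    (hp : ScorpionTuple G ℓ p) {i : Fin (ℓ + 2)} (hi : i ≠ 0) {a b c : V}
    (hab : a ≠ b) (hac : a ≠ c) (hbc : b ≠ c)
    (ha : G.Adj (p i) a) (hb : G.Adj (p i) b) (hc : G.Adj (p i) c) : False := by
  obtain ⟨ja, rfl, hja⟩ := scorpion_nbr hp hi ha
  obtain ⟨jb, rfl, hjb⟩ := scorpion_nbr hp hi hb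
  obtain ⟨jc, rfl, hjc⟩ := scorpion_nbr hp hi hc
  have h3 : ja.val = jb.val ∨ ja.val = jc.val ∨ jb.val = jc.val := by omega
  rcases h3 with h | h | h
  · exact hab (congrArg p (Fin.ext h))
  · exact hac (congrArg p (Fin.ext h))
  · exact hbc (congrArg p (Fin.ext h))

/-- If `|V| ≥ ℓ+4`, there are two distinct vertices outside the path. -/
lemma two_outside {V : Type*} [Fintype V] {ℓ : ℕ} (hcard : ℓ + 4 ≤ Fintype.card V)
    {q : Fin (ℓ + 2) → V} (hq : Function.Injective q) :
    ∃ u w : V, u ≠ w ∧ u ∉ Set.range q ∧ w ∉ Set.range q := by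
  classical
  have h1 : (Finset.univ.image q).card = ℓ + 2 := by
    rw [Finset.card_image_of_injective _ hq, Finset.card_univ, Fintype.card_fin]
  have h2 : 1 < (Finset.univ.image q)ᶜ.card := by
    have h := Finset.card_compl (Finset.univ.image q)
    omega
  obtain ⟨u, hu, w, hw, huw⟩ := Finset.one_lt_card.mp h2
  simp only [Finset.mem_compl, Finset.mem_image] at hu hw
  refine ⟨u, w, huw, ?_, ?_⟩
  · rintro ⟨i, rfl⟩; exact hu ⟨i, Finset.mem_univ i, rfl⟩
  · rintro ⟨i, rfl⟩; exact hw ⟨i, Finset.mem_univ i, rfl⟩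

/-- The tuple (body, tail, sting) of an `ℓ`-scorpion on `k ≥ ℓ+4` vertices is unique. -/
theorem stmt_3 {V : Type*} [Fintype V] (G : SimpleGraph V)
    (ℓ : ℕ) (hl : 1 ≤ ℓ) (hcard : ℓ + 4 ≤ Fintype.card V)
    (p q : Fin (ℓ + 2) → V) (hp : ScorpionTuple G ℓ p) (hq : ScorpionTuple G ℓ q) :
    p = q := by
  obtain ⟨hpinj, hpadj, hpleg, hpnot⟩ := hp
  obtain ⟨hqinj, hqadj, hqleg, hqnot⟩ := hq
  have hp' : ScorpionTuple G ℓ p := ⟨hpinj, hpadj, hpleg, hpnot⟩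
  have hq' : ScorpionTuple G ℓ q := ⟨hqinj, hqadj, hqleg, hqnot⟩
  -- two legs of q
  obtain ⟨u, w, huw, hu, hw⟩ := two_outside hcard hqinj
  -- three distinct neighbors of q 0 : u, w, q 1
  have hadju : G.Adj (q 0) u := hqleg u hu
  have hadjw : G.Adj (q 0) w := hqleg w hw
  have hq01 : G.Adj (q 0) (q 1) := by
    refine (hqadj 0 1).mpr (Or.inl ?_)
    simp
  have huq1 : u ≠ q 1 := fun h => hu ⟨1, h.symm⟩
  have hwq1 : w ≠ q 1 := fun h => hw ⟨1, h.symm⟩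
  -- two legs of p
  obtain ⟨u', w', huw', hu', hw'⟩ := two_outside hcard hpinj
  have hadju' : G.Adj (p 0) u' := hpleg u' hu'
  have hadjw' : G.Adj (p 0) w' := hpleg w' hw'
  have hp01 : G.Adj (p 0) (p 1) := by
    refine (hpadj 0 1).mpr (Or.inl ?_)
    simp
  have hup1 : u' ≠ p 1 := fun h => hu' ⟨1, h.symm⟩
  have hwp1 : w' ≠ p 1 := fun h => hw' ⟨1, h.symm⟩
  -- q 0 ∈ range p
  have hq0mem : q 0 ∈ Set.range p := by
    by_contra h0
    have hadjp0q0 : G.Adj (p 0) (q 0) := hpleg _ h0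
    by_cases hpm : p 0 ∈ Set.range q
    · obtain ⟨j, hj⟩ := hpm
      have hj0 : j ≠ 0 := by
        rintro rfl; exact h0 ⟨0, hj.symm⟩
      have hjadj : G.Adj (q 0) (q j) := by rw [hj]; exact hadjp0q0.symm
      have hjval : j.val = 1 := by
        have := (hqadj 0 j).mp hjadj
        have hj0' : j.val ≠ 0 := fun h => hj0 (Fin.ext h)
        simp only [Fin.val_zero] at this
        omega
      have hj1 : j = 1 := Fin.ext (by simp [hjval])
      rw [hj1] at hj
      -- p 0 = q 1, but p 0 has three distinct neighbors, q 1 has at most two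
      have h1ne : (1 : Fin (ℓ + 2)) ≠ 0 := by
        intro h; simpa using congrArg Fin.val h
      exact scorpion_not_three hq' h1ne huw' hup1 hwp1
        (hj ▸ hadju') (hj ▸ hadjw') (hj ▸ hp01)
    · -- p 0 ∉ range q : q 1 must be in range p
      have hq1mem : q 1 ∈ Set.range p := by
        by_contra h1
        have : G.Adj (p 0) (q 1) := hpleg _ h1
        have h1ne : (1 : Fin (ℓ + 2)) ≠ 0 := by
          intro h; simpa using congrArg Fin.val h
        exact hqnot 1 h1ne (p 0) hpm this.symm
      obtain ⟨i, hi⟩ := hq1mem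
      by_cases hi0 : i = 0
      · rw [hi0] at hi; exact hpm ⟨1, hi.symm⟩
      · have : G.Adj (p i) (q 0) := by rw [hi]; exact hq01.symm
        obtain ⟨j, hj, _⟩ := scorpion_nbr hp' hi0 this
        exact h0 ⟨j, hj.symm⟩
  -- q 0 = p 0
  obtain ⟨i, hi⟩ := hq0mem
  have hi0 : i = 0 := by
    by_contra hi0
    exact scorpion_not_three hp' hi0 huw huq1 hwq1
      (hi ▸ hadju) (hi ▸ hadjw) (hi ▸ hq01)
  rw [hi0] at hi
  have hq0 : q 0 = p 0 := hi.symm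
  -- main induction
  have main : ∀ n, ∀ hn : n < ℓ + 2, q ⟨n, hn⟩ = p ⟨n, hn⟩ := by
    intro n
    induction n using Nat.strong_induction_on with
    | _ n ih =>
      match n with
      | 0 =>
        intro hn
        have h0 : (⟨0, hn⟩ : Fin (ℓ + 2)) = 0 := Fin.ext (by simp)
        rw [h0]; exact hq0
      | 1 =>
        intro hn
        have h1 : (⟨1, hn⟩ : Fin (ℓ + 2)) = 1 := Fin.ext (by simp)
        rw [h1]
        have h2lt : 2 < ℓ + 2 := by omega
        have hq12 : G.Adj (q ⟨2, h2lt⟩) (q 1) := by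
          refine (hqadj ⟨2, h2lt⟩ 1).mpr (Or.inr ?_)
          simp
        have hq1mem : q 1 ∈ Set.range p := by
          by_contra h1m
          by_cases h2m : q ⟨2, h2lt⟩ ∈ Set.range p
          · obtain ⟨i, hi2⟩ := h2m
            have hi0 : i ≠ 0 := by
              rintro rfl
              have : q ⟨2, h2lt⟩ = q 0 := by rw [← hi2, hq0]
              have := hqinj this
              simpa [Fin.ext_iff] using this
            exact hpnot i hi0 (q 1) h1m (hi2 ▸ hq12)
          · have : G.Adj (p 0) (q ⟨2, h2lt⟩) := hpleg _ h2m
            rw [← hq0] at this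
            have := (hqadj 0 ⟨2, h2lt⟩).mp this
            simp at this
          -- done
        obtain ⟨i, hi1⟩ := hq1mem
        have hadj : G.Adj (p i) (p 0) := by
          rw [hi1, ← hq0]; exact hq01.symm
        have := (hpadj i 0).mp hadj
        simp only [Fin.val_zero] at this
        have hival : i.val = 1 := by omega
        have : i = 1 := Fin.ext (by simp [hival])
        rw [this] at hi1
        exact hi1.symm
      | (m + 2) =>
        intro hn
        have hm1 : m + 1 < ℓ + 2 := by omega
        have hm : m < ℓ + 2 := by omega
        have ih1 : q ⟨m + 1, hm1⟩ = p ⟨m + 1, hm1⟩ := ih (m + 1) (by omega) hm1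
        have ih0 : q ⟨m, hm⟩ = p ⟨m, hm⟩ := ih m (by omega) hm
        have hadj : G.Adj (q ⟨m + 2, hn⟩) (q ⟨m + 1, hm1⟩) := by
          refine (hqadj _ _).mpr (Or.inr ?_)
          simp
        rw [ih1] at hadj
        have hne : (⟨m + 1, hm1⟩ : Fin (ℓ + 2)) ≠ 0 := by
          intro h; simpa using congrArg Fin.val h
        obtain ⟨j, hj, hjv⟩ := scorpion_nbr hp' hne hadj.symm
        rcases hjv with h | h
        · -- j = m, contradiction with injectivity of q
          exfalso
          have : q ⟨m + 2, hn⟩ = q ⟨m, hm⟩ := by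
            rw [hj, ih0]
            congr 1
            exact Fin.ext (by simpa using h)
          have := hqinj this
          simpa [Fin.ext_iff] using this
        · rw [hj]
          congr 1
          exact Fin.ext (by simpa using h.symm)
  funext i
  have := main i.val i.isLt
  simpa using this.symm
end

section
/- For every finite graph G, ℓ ≥ 1 and k ≥ ℓ+4, the number of k-element vertex subsets X such that G[X] is an ℓ-scorpion equals the sum, over all tuples q = (b,t₁,…,t_ℓ,s) of ℓ+2 distinct vertices inducing a path in G in this order, of binomial(X_G(q), k−ℓ−2), where X_G(q) = |N(b) \ (N(t₁) ∪ ⋯ ∪ N(t_ℓ) ∪ N(s))|. -/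
/-- `p` witnesses that the induced subgraph `G[X]` is an `ℓ`-scorpion with body
`p 0`, tail `p 1, …, p ℓ` and sting `p (ℓ+1)`. -/
def ScorpionTupleOn {V : Type*} (G : SimpleGraph V) (ℓ : ℕ)
    (p : Fin (ℓ + 2) → V) (X : Finset V) : Prop :=
  Function.Injective p ∧ (∀ i : Fin (ℓ + 2), p i ∈ X) ∧
  (∀ i j : Fin (ℓ + 2), G.Adj (p i) (p j) ↔ (i.val + 1 = j.val ∨ j.val + 1 = i.val)) ∧
  (∀ v ∈ X, v ∉ Set.range p → G.Adj (p 0) v) ∧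
  (∀ i : Fin (ℓ + 2), i ≠ 0 → ∀ v ∈ X, v ∉ Set.range p → ¬ G.Adj (p i) v)


open Finset in
private theorem scorpion_unique {V : Type*} [DecidableEq V] (G : SimpleGraph V)
    [DecidableRel G.Adj] (ℓ : ℕ) (hl : 1 ≤ ℓ) (k : ℕ) (hk : ℓ + 4 ≤ k)
    (X : Finset V) (hX : X.card = k)
    (p q : Fin (ℓ + 2) → V) (hp : ScorpionTupleOn G ℓ p X) (hq : ScorpionTupleOn G ℓ q X) :
    p = q := by
  obtain ⟨pinj, pmem, padj, pbody, pleg⟩ := hp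
  obtain ⟨qinj, qmem, qadj, qbody, qleg⟩ := hq
  obtain ⟨c, hc⟩ := Nat.exists_eq_add_of_le hk
  set nbr : V → Finset V := fun v => X.filter (fun w => G.Adj v w) with hnbr
  have hv1 : ((1 : Fin (ℓ + 2)) : ℕ) = 1 := rfl
  have hv0 : ((0 : Fin (ℓ + 2)) : ℕ) = 0 := rfl
  have hmemrange : ∀ (r : Fin (ℓ + 2) → V) v, v ∈ image r univ ↔ v ∈ Set.range r := by
    intro r v; simp [mem_image, Set.mem_range]
  have hrange : ∀ r : Fin (ℓ + 2) → V, Function.Injective r → (∀ i, r i ∈ X) →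
      (X \ image r univ).card = c + 2 := by
    intro r rinj rmem
    have hsub : image r univ ⊆ X := by
      intro v hv; obtain ⟨i, _, rfl⟩ := mem_image.1 hv; exact rmem i
    have h1 : (image r univ).card = ℓ + 2 := by
      rw [card_image_of_injective _ rinj, card_univ, Fintype.card_fin]
    rw [card_sdiff_of_subset hsub, h1, hX]; omega
  -- lower bound for the body of q
  have hqlow : c + 3 ≤ (nbr (q 0)).card := by
    have hq1 : q 1 ∉ X \ image q univ :=
      fun h => (mem_sdiff.1 h).2 (mem_image.2 ⟨1, mem_univ _, rfl⟩)
    have hsub : insert (q 1) (X \ image q univ) ⊆ nbr (q 0) := by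
      intro v hv
      rcases mem_insert.1 hv with rfl | hv
      · exact mem_filter.2 ⟨qmem 1, (qadj 0 1).2 (Or.inl (by rw [hv0, hv1]))⟩
      · obtain ⟨hvX, hvr⟩ := mem_sdiff.1 hv
        exact mem_filter.2 ⟨hvX, qbody v hvX (by rwa [← hmemrange])⟩
    calc c + 3 = (insert (q 1) (X \ image q univ)).card := by
          rw [card_insert_of_notMem hq1, hrange q qinj qmem]
      _ ≤ (nbr (q 0)).card := card_le_card hsub
  -- the body of q equals the body of p
  have hq0 : q 0 = p 0 := by
    by_cases hr : q 0 ∈ Set.range p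
    · obtain ⟨j, hj⟩ := hr
      by_contra hne
      have hj0 : j ≠ 0 := fun h => hne (by rw [← hj, h])
      -- neighbours of p j lie in the image of at most two indices
      have hsub : nbr (q 0) ⊆ image p (univ.filter
          (fun m => (m : ℕ) + 1 = (j : ℕ) ∨ (j : ℕ) + 1 = (m : ℕ))) := by
        intro w hw
        obtain ⟨hwX, hadj⟩ := mem_filter.1 hw
        rw [← hj] at hadj
        have hwr : w ∈ Set.range p := by
          by_contra hwr
          exact pleg j hj0 w hwX hwr hadj
        obtain ⟨m, rfl⟩ := hwr
        exact mem_image.2 ⟨m, mem_filter.2 ⟨mem_univ _,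
          ((padj j m).1 hadj).symm.imp (fun h => h) (fun h => h)⟩, rfl⟩
      have hjv : (j : ℕ) ≠ 0 := fun h => hj0 (Fin.ext h)
      have hcard2 : (univ.filter (fun m : Fin (ℓ + 2) =>
          (m : ℕ) + 1 = (j : ℕ) ∨ (j : ℕ) + 1 = (m : ℕ))).card ≤ 2 := by
        set a : Fin (ℓ + 2) := ⟨(j : ℕ) - 1, by omega⟩ with ha
        by_cases hb : (j : ℕ) + 1 < ℓ + 2
        · refine le_trans (card_le_card (t := {a, ⟨(j : ℕ) + 1, hb⟩}) ?_)
            ((card_insert_le _ _).trans (by simp))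
          intro m hm
          rcases (mem_filter.1 hm).2 with h | h
          · exact mem_insert.2 (Or.inl (Fin.ext (by simp [ha]; omega)))
          · exact mem_insert.2 (Or.inr (by simp [Fin.ext_iff]; omega))
        · refine le_trans (card_le_card (t := {a}) ?_) (by simp)
          intro m hm
          rcases (mem_filter.1 hm).2 with h | h
          · exact mem_singleton.2 (Fin.ext (by simp [ha]; omega))
          · exact absurd m.isLt (by omega)
      have := (hqlow.trans (card_le_card hsub)).trans
        ((card_image_le).trans hcard2)
      omega
    · -- q 0 is a leg of p : too few neighbours
      exfalso
      have hsub : nbr (q 0) ⊆ insert (p 0) ((X \ image p univ).erase (q 0)) := by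
        intro w hw
        obtain ⟨hwX, hadj⟩ := mem_filter.1 hw
        by_cases hwr : w ∈ Set.range p
        · obtain ⟨m, rfl⟩ := hwr
          rcases eq_or_ne m 0 with rfl | hm0
          · exact mem_insert_self _ _
          · exact absurd hadj.symm (pleg m hm0 (q 0) (qmem 0) hr)
        · refine mem_insert_of_mem (mem_erase.2 ⟨hadj.ne'.symm ∘ Eq.symm, ?_⟩)
          exact mem_sdiff.2 ⟨hwX, fun h => hwr ((hmemrange p w).1 h)⟩
      have h1 : q 0 ∈ X \ image p univ :=
        mem_sdiff.2 ⟨qmem 0, fun h => hr ((hmemrange p _).1 h)⟩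
      have h2 : ((X \ image p univ).erase (q 0)).card = c + 1 := by
        rw [card_erase_of_mem h1, hrange p pinj pmem]
        omega
      have := (hqlow.trans (card_le_card hsub)).trans (card_insert_le _ _)
      omega
  -- every vertex of q lies in the range of p
  have key : ∀ i, q i ∈ Set.range p := by
    intro i
    by_contra hiP
    have hadj0 : G.Adj (q 0) (q i) := hq0 ▸ pbody (q i) (qmem i) hiP
    have hi1 : (i : ℕ) = 1 := by
      rcases (qadj 0 i).1 hadj0 with h | h
      · omega
      · rw [hv0] at h; omega
    have h2lt : 2 < ℓ + 2 := by omega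
    set i2 : Fin (ℓ + 2) := ⟨2, h2lt⟩ with hi2
    have hadj2 : G.Adj (q i) (q i2) := (qadj i i2).2 (Or.inl (by rw [hi1]))
    by_cases h2r : q i2 ∈ Set.range p
    · obtain ⟨m, hm⟩ := h2r
      have hm0 : m ≠ 0 := by
        rintro rfl
        have : q i2 = q 0 := by rw [← hm, hq0]
        have := qinj this
        simp [hi2, Fin.ext_iff] at this
      exact pleg m hm0 (q i) (qmem i) hiP (hm ▸ hadj2.symm)
    · have hadj02 : G.Adj (q 0) (q i2) := hq0 ▸ pbody (q i2) (qmem i2) h2r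
      rcases (qadj 0 i2).1 hadj02 with h | h
      · rw [hv0] at h; simp [hi2] at h
      · rw [hv0] at h; omega
  choose σ hσ using fun i => key i
  have σinj : Function.Injective σ := fun i j h => qinj (by rw [← hσ i, ← hσ j, h])
  have σ0 : σ 0 = 0 := pinj (by rw [hσ 0, hq0])
  have σadj : ∀ i j : Fin (ℓ + 2),
      (((σ i : ℕ) + 1 = (σ j : ℕ)) ∨ ((σ j : ℕ) + 1 = (σ i : ℕ))) ↔
      ((i : ℕ) + 1 = (j : ℕ) ∨ (j : ℕ) + 1 = (i : ℕ)) := by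
    intro i j
    rw [← padj, hσ, hσ, qadj]
  have hall : ∀ n (h : n < ℓ + 2), σ ⟨n, h⟩ = ⟨n, h⟩ := by
    intro n
    induction n using Nat.strong_induction_on with
    | _ n IH =>
      intro h
      match n, h with
      | 0, h => exact σ0
      | (m+1), h =>
        have hm : m < ℓ + 2 := by omega
        have IHm : σ ⟨m, hm⟩ = ⟨m, hm⟩ := IH m (by omega) hm
        have := (σadj ⟨m, hm⟩ ⟨m + 1, h⟩).2 (Or.inl rfl)
        rw [IHm] at this
        rcases this with h1 | h1
        · exact Fin.ext h1.symm
        · exfalso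
          have h1' : (σ ⟨m + 1, h⟩ : ℕ) + 1 = m := h1
          have hm1 : 1 ≤ m := by omega
          have hmm : m - 1 < ℓ + 2 := by omega
          have IHm1 : σ ⟨m - 1, hmm⟩ = ⟨m - 1, hmm⟩ := IH (m - 1) (by omega) hmm
          have heq : σ ⟨m + 1, h⟩ = σ ⟨m - 1, hmm⟩ := by
            rw [IHm1]; exact Fin.ext (show (σ ⟨m + 1, h⟩ : ℕ) = m - 1 by omega)
          have := σinj heq
          rw [Fin.mk.injEq] at this
          omega
  funext i
  rw [← hσ i]
  congr 1
  have := hall i.val i.isLt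
  simpa using this.symm

open Finset Classical in
private theorem scorpion_count {V : Type*} [Fintype V] (G : SimpleGraph V)
    (ℓ : ℕ) (hl : 1 ≤ ℓ) (k : ℕ) (hk : ℓ + 4 ≤ k) (p : Fin (ℓ + 2) → V)
    (hinj : Function.Injective p)
    (hadj : ∀ i j : Fin (ℓ + 2), G.Adj (p i) (p j) ↔ (i.val + 1 = j.val ∨ j.val + 1 = i.val)) :
    (univ.filter (fun X : Finset V => X.card = k ∧ ScorpionTupleOn G ℓ p X)).card
      = Nat.choose (univ.filter (fun v : V =>
          G.Adj (p 0) v ∧ ∀ i : Fin (ℓ + 2), i ≠ 0 → ¬ G.Adj (p i) v)).card (k - ℓ - 2) := by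
  set L : Finset V := univ.filter (fun v : V =>
      G.Adj (p 0) v ∧ ∀ i : Fin (ℓ + 2), i ≠ 0 → ¬ G.Adj (p i) v) with hL
  set P : Finset V := image p univ with hP
  have hmemrange : ∀ v, v ∈ P ↔ v ∈ Set.range p := by
    intro v; simp [hP, mem_image, Set.mem_range]
  have hPcard : P.card = ℓ + 2 := by
    rw [hP, card_image_of_injective _ hinj, card_univ, Fintype.card_fin]
  have hPL : ∀ v ∈ P, v ∉ L := by
    intro v hv hvL
    obtain ⟨i, _, rfl⟩ := mem_image.1 hv
    obtain ⟨_, h1, h2⟩ := mem_filter.1 hvL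
    have hi1 : (i : ℕ) = 1 := by
      rcases (hadj 0 i).1 h1 with h | h
      · exact h.symm
      · exact absurd h (by simp)
    have h2lt : 2 < ℓ + 2 := by omega
    refine h2 ⟨2, h2lt⟩ (by simp [Fin.ext_iff]) ?_
    exact (hadj ⟨2, h2lt⟩ i).2 (Or.inr (by simp [hi1]))
  have hdisj : ∀ {Y : Finset V}, Y ⊆ L → Disjoint Y P :=
    fun hY => disjoint_left.2 fun {a} haY haP => hPL a haP (hY haY)
  rw [show k - ℓ - 2 = k - (ℓ + 2) by omega, ← card_powersetCard]
  refine card_nbij' (fun X => X \ P) (fun Y => Y ∪ P) ?_ ?_ ?_ ?_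
  · rintro X hX
    obtain ⟨-, hXcard, -, hmem, -, hbody, hleg⟩ := mem_filter.1 hX
    have hPX : P ⊆ X := fun v hv => by
      obtain ⟨i, _, rfl⟩ := mem_image.1 hv; exact hmem i
    refine mem_powersetCard.2 ⟨fun v hv => ?_, ?_⟩
    · obtain ⟨hvX, hvP⟩ := mem_sdiff.1 hv
      have hvr : v ∉ Set.range p := fun h => hvP ((hmemrange v).2 h)
      exact mem_filter.2 ⟨mem_univ _, hbody v hvX hvr, fun i hi => hleg i hi v hvX hvr⟩
    · rw [card_sdiff_of_subset hPX, hXcard, hPcard]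
  · rintro Y hY
    obtain ⟨hYL, hYcard⟩ := mem_powersetCard.1 hY
    have hcard : (Y ∪ P).card = k := by
      rw [card_union_of_disjoint (hdisj hYL), hYcard, hPcard]; omega
    refine mem_filter.2 ⟨mem_univ _, hcard, hinj, fun i => mem_union_right _ (mem_image.2 ⟨i, mem_univ _, rfl⟩), hadj, ?_, ?_⟩
    · intro v hv hvr
      have hvY : v ∈ Y := by
        rcases mem_union.1 hv with h | h
        · exact h
        · exact absurd ((hmemrange v).1 h) hvr
      exact ((mem_filter.1 (hYL hvY)).2).1
    · intro i hi v hv hvr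
      have hvY : v ∈ Y := by
        rcases mem_union.1 hv with h | h
        · exact h
        · exact absurd ((hmemrange v).1 h) hvr
      exact ((mem_filter.1 (hYL hvY)).2).2 i hi
  · rintro X hX
    obtain ⟨-, -, -, hmem, -, -, -⟩ := mem_filter.1 hX
    have hPX : P ⊆ X := fun v hv => by
      obtain ⟨i, _, rfl⟩ := mem_image.1 hv; exact hmem i
    exact sdiff_union_of_subset hPX
  · rintro Y hY
    obtain ⟨hYL, _⟩ := mem_powersetCard.1 hY
    show (Y ∪ P) \ P = Y
    rw [union_sdiff_right, sdiff_eq_self_of_disjoint (hdisj hYL)]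

open Finset Classical in
theorem stmt_6' {V : Type*} [Fintype V] (G : SimpleGraph V)
    (ℓ : ℕ) (hl : 1 ≤ ℓ) (k : ℕ) (hk : ℓ + 4 ≤ k) :
    {X : Finset V | X.card = k ∧ ∃ p : Fin (ℓ + 2) → V, ScorpionTupleOn G ℓ p X}.ncard
      = ∑ p : Fin (ℓ + 2) → V,
          if (Function.Injective p ∧
              ∀ i j : Fin (ℓ + 2), G.Adj (p i) (p j) ↔ (i.val + 1 = j.val ∨ j.val + 1 = i.val))
          then Nat.choose
            {v : V | G.Adj (p 0) v ∧ ∀ i : Fin (ℓ + 2), i ≠ 0 → ¬ G.Adj (p i) v}.ncard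
            (k - ℓ - 2)
          else 0 := by
  classical
  set B : (Fin (ℓ + 2) → V) → Finset (Finset V) := fun p =>
    univ.filter (fun X : Finset V => X.card = k ∧ ScorpionTupleOn G ℓ p X) with hB
  have h1 : {X : Finset V | X.card = k ∧ ∃ p : Fin (ℓ + 2) → V, ScorpionTupleOn G ℓ p X}
      = ↑(univ.filter (fun X : Finset V =>
          X.card = k ∧ ∃ p : Fin (ℓ + 2) → V, ScorpionTupleOn G ℓ p X)) := by
    ext X; simp
  rw [h1, Set.ncard_coe_finset]
  have h2 : univ.filter (fun X : Finset V =>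
      X.card = k ∧ ∃ p : Fin (ℓ + 2) → V, ScorpionTupleOn G ℓ p X) = univ.biUnion B := by
    ext X
    simp only [hB, mem_filter, mem_biUnion, mem_univ, true_and]
    constructor
    · rintro ⟨hc, q, hq⟩; exact ⟨q, hc, hq⟩
    · rintro ⟨q, hc, hq⟩; exact ⟨hc, q, hq⟩
  rw [h2, card_biUnion]
  · refine Finset.sum_congr rfl fun p _ => ?_
    by_cases hpath : Function.Injective p ∧
        ∀ i j : Fin (ℓ + 2), G.Adj (p i) (p j) ↔ (i.val + 1 = j.val ∨ j.val + 1 = i.val)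
    · rw [if_pos hpath]
      have hset : {v : V | G.Adj (p 0) v ∧ ∀ i : Fin (ℓ + 2), i ≠ 0 → ¬ G.Adj (p i) v}
          = ↑(univ.filter (fun v : V =>
              G.Adj (p 0) v ∧ ∀ i : Fin (ℓ + 2), i ≠ 0 → ¬ G.Adj (p i) v)) := by
        ext v; simp
      rw [hset, Set.ncard_coe_finset]
      exact scorpion_count G ℓ hl k hk p hpath.1 hpath.2
    · rw [if_neg hpath]
      have : B p = ∅ := by
        refine eq_empty_of_forall_notMem fun X hX => ?_
        obtain ⟨-, -, hi, -, ha, -, -⟩ := mem_filter.1 hX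
        exact hpath ⟨hi, ha⟩
      rw [this, card_empty]
  · intro a _ b _ hab
    refine disjoint_left.2 fun {X} hXa hXb => hab ?_
    obtain ⟨-, hca, hsa⟩ := mem_filter.1 hXa
    obtain ⟨-, -, hsb⟩ := mem_filter.1 hXb
    exact scorpion_unique G ℓ hl k hk X hca a b hsa hsb


open Classical in
/-- The number of `k`-element vertex sets inducing an `ℓ`-scorpion equals the sum,
over all tuples of `ℓ+2` distinct vertices inducing a path in order, of
`choose (X_G(q)) (k - ℓ - 2)`. -/
theorem stmt_6 {V : Type*} [Fintype V] (G : SimpleGraph V)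
    (ℓ : ℕ) (hl : 1 ≤ ℓ) (k : ℕ) (hk : ℓ + 4 ≤ k) :
    {X : Finset V | X.card = k ∧ ∃ p : Fin (ℓ + 2) → V, ScorpionTupleOn G ℓ p X}.ncard
      = ∑ p : Fin (ℓ + 2) → V,
          if (Function.Injective p ∧
              ∀ i j : Fin (ℓ + 2), G.Adj (p i) (p j) ↔ (i.val + 1 = j.val ∨ j.val + 1 = i.val))
          then Nat.choose
            {v : V | G.Adj (p 0) v ∧ ∀ i : Fin (ℓ + 2), i ≠ 0 → ¬ G.Adj (p i) v}.ncard
            (k - ℓ - 2)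
          else 0 :=
  stmt_6' G ℓ hl k hk
end

section
/- For every ℓ ≥ 1 and every graph H on k ≥ ℓ+4 vertices, the alternating enumerator of the ℓ-scorpion property at H, defined as Ψ̂_ℓ(H) = (−1)^{|E(H)|} Σ_{S ⊆ E(H)} (−1)^{|S|} [H[S] is an ℓ-scorpion], is nonzero if and only if H is an ℓ-scorpion fossil. -/
set_option linter.unusedSectionVars false

/-- `p` witnesses an `ℓ`-scorpion skeleton: an `ℓ`-scorpion whose legs form an
independent set. -/
def ScorpionSkeletonTuple {V : Type*} (G : SimpleGraph V) (ℓ : ℕ)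
    (p : Fin (ℓ + 2) → V) : Prop :=
  ScorpionTuple G ℓ p ∧
  ∀ u v : V, u ∉ Set.range p → v ∉ Set.range p → ¬ G.Adj u v

/-- `H` is an `ℓ`-scorpion fossil: it is obtained from an `ℓ`-scorpion skeleton `S`
by adding edges `uv` such that at least one of `u, v` is not a leg. -/
def IsScorpionFossil {V : Type*} (H : SimpleGraph V) (ℓ : ℕ) : Prop :=
  ∃ (S : SimpleGraph V) (p : Fin (ℓ + 2) → V),
    ScorpionSkeletonTuple S ℓ p ∧ S ≤ H ∧
    ∀ u v : V, H.Adj u v → S.Adj u v ∨ u ∈ Set.range p ∨ v ∈ Set.range p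

namespace ScorpionAux

open Finset

variable {V : Type*} [Fintype V] [DecidableEq V]

def pathEdges (ℓ : ℕ) (p : Fin (ℓ + 2) → V) : Finset (Sym2 V) :=
  (Finset.univ : Finset (Fin (ℓ + 1))).image (fun i => s(p i.castSucc, p i.succ))

def starEdges (ℓ : ℕ) (p : Fin (ℓ + 2) → V) : Finset (Sym2 V) :=
  (Finset.univ \ Finset.univ.image p).image (fun v => s(p 0, v))

def forced (ℓ : ℕ) (p : Fin (ℓ + 2) → V) : Finset (Sym2 V) :=
  pathEdges ℓ p ∪ starEdges ℓ p

lemma mem_image_range {p : Fin (ℓ + 2) → V} {v : V} :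
    v ∈ Finset.univ.image p ↔ v ∈ Set.range p := by
  simp [Set.mem_range, eq_comm]

lemma mem_pathEdges {ℓ : ℕ} {p : Fin (ℓ + 2) → V} {e : Sym2 V} :
    e ∈ pathEdges ℓ p ↔ ∃ i : Fin (ℓ + 1), s(p i.castSucc, p i.succ) = e := by
  simp [pathEdges]

lemma mem_starEdges {ℓ : ℕ} {p : Fin (ℓ + 2) → V} {e : Sym2 V} :
    e ∈ starEdges ℓ p ↔ ∃ v, v ∉ Set.range p ∧ s(p 0, v) = e := by
  simp [starEdges, mem_image_range]

lemma mem_forced_pair {ℓ : ℕ} {p : Fin (ℓ + 2) → V} (hp : Function.Injective p)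
    (i j : Fin (ℓ + 2)) :
    s(p i, p j) ∈ forced ℓ p ↔ (i.val + 1 = j.val ∨ j.val + 1 = i.val) := by
  constructor
  · intro h
    rcases Finset.mem_union.1 h with h | h
    · obtain ⟨a, ha⟩ := mem_pathEdges.1 h
      rcases Sym2.eq_iff.1 ha with ⟨h1, h2⟩ | ⟨h1, h2⟩
      · left
        have e1 := hp h1; have e2 := hp h2
        rw [← e1, ← e2]; simp
      · right
        have e1 := hp h2; have e2 := hp h1
        rw [← e1, ← e2]; simp
    · obtain ⟨v, hv, heq⟩ := mem_starEdges.1 h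
      rcases Sym2.eq_iff.1 heq with ⟨h1, h2⟩ | ⟨h1, h2⟩
      · exact absurd ⟨j, h2.symm⟩ hv
      · exact absurd ⟨i, h2.symm⟩ hv
  · intro h
    refine Finset.mem_union.2 (Or.inl (mem_pathEdges.2 ?_))
    rcases h with h | h
    · have hi : i.val < ℓ + 1 := by have := j.isLt; omega
      refine ⟨⟨i.val, hi⟩, ?_⟩
      have h1 : (Fin.castSucc ⟨i.val, hi⟩) = i := by ext; simp
      have h2 : (Fin.succ ⟨i.val, hi⟩) = j := by ext; simpa using h
      rw [h1, h2]
    · have hj : j.val < ℓ + 1 := by have := i.isLt; omega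
      refine ⟨⟨j.val, hj⟩, ?_⟩
      have h1 : (Fin.castSucc ⟨j.val, hj⟩) = j := by ext; simp
      have h2 : (Fin.succ ⟨j.val, hj⟩) = i := by ext; simpa using h
      rw [h1, h2, Sym2.eq_swap]

lemma mem_forced_leg {ℓ : ℕ} {p : Fin (ℓ + 2) → V} (hp : Function.Injective p)
    (i : Fin (ℓ + 2)) {v : V} (hv : v ∉ Set.range p) :
    s(p i, v) ∈ forced ℓ p ↔ i = 0 := by
  constructor
  · intro h
    rcases Finset.mem_union.1 h with h | h
    · obtain ⟨a, ha⟩ := mem_pathEdges.1 h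
      rcases Sym2.eq_iff.1 ha with ⟨h1, h2⟩ | ⟨h1, h2⟩
      · exact absurd ⟨a.succ, h2⟩ hv
      · exact absurd ⟨a.castSucc, h1⟩ hv
    · obtain ⟨w, hw, heq⟩ := mem_starEdges.1 h
      rcases Sym2.eq_iff.1 heq with ⟨h1, h2⟩ | ⟨h1, h2⟩
      · exact (hp h1).symm
      · exact absurd ⟨0, h1⟩ hv
  · rintro rfl
    exact Finset.mem_union.2 (Or.inr (mem_starEdges.2 ⟨v, hv, rfl⟩))

lemma notMem_forced_legs {ℓ : ℕ} {p : Fin (ℓ + 2) → V} {u v : V}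
    (hu : u ∉ Set.range p) (hv : v ∉ Set.range p) : s(u, v) ∉ forced ℓ p := by
  intro h
  rcases Finset.mem_union.1 h with h | h
  · obtain ⟨a, ha⟩ := mem_pathEdges.1 h
    rcases Sym2.eq_iff.1 ha with ⟨h1, h2⟩ | ⟨h1, h2⟩
    · exact hu ⟨a.castSucc, h1⟩
    · exact hv ⟨a.castSucc, h1⟩
  · obtain ⟨w, hw, heq⟩ := mem_starEdges.1 h
    rcases Sym2.eq_iff.1 heq with ⟨h1, h2⟩ | ⟨h1, h2⟩
    · exact hu ⟨0, h1⟩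
    · exact hv ⟨0, h1⟩

lemma forced_endpoint_range {ℓ : ℕ} {p : Fin (ℓ + 2) → V} {u v : V}
    (h : s(u, v) ∈ forced ℓ p) : u ∈ Set.range p ∨ v ∈ Set.range p := by
  by_contra hc
  push_neg at hc
  exact notMem_forced_legs hc.1 hc.2 h

lemma forced_not_isDiag {ℓ : ℕ} {p : Fin (ℓ + 2) → V} (hp : Function.Injective p) :
    ∀ e ∈ forced ℓ p, ¬ e.IsDiag := by
  intro e he
  rcases Finset.mem_union.1 he with h | h
  · obtain ⟨a, ha⟩ := mem_pathEdges.1 h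
    rw [← ha, Sym2.mk_isDiag_iff]
    intro hd
    have := hp hd
    have : a.castSucc.val = a.succ.val := congrArg Fin.val this
    simp at this
  · obtain ⟨w, hw, heq⟩ := mem_starEdges.1 h
    rw [← heq, Sym2.mk_isDiag_iff]
    intro hd
    exact hw ⟨0, hd⟩

lemma card_forced {ℓ : ℕ} {p : Fin (ℓ + 2) → V} (hp : Function.Injective p) :
    (forced ℓ p).card = Fintype.card V - 1 := by
  have hk : ℓ + 2 ≤ Fintype.card V := by
    simpa using Fintype.card_le_of_injective p hp
  have hdisj : Disjoint (pathEdges ℓ p) (starEdges ℓ p) := by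
    rw [Finset.disjoint_left]
    intro e he hs
    obtain ⟨a, ha⟩ := mem_pathEdges.1 he
    obtain ⟨w, hw, heq⟩ := mem_starEdges.1 hs
    rw [← ha] at heq
    rcases Sym2.eq_iff.1 heq with ⟨h1, h2⟩ | ⟨h1, h2⟩
    · exact hw ⟨a.succ, h2.symm⟩
    · exact hw ⟨a.castSucc, h2.symm⟩
  have hcp : (pathEdges ℓ p).card = ℓ + 1 := by
    rw [pathEdges, Finset.card_image_of_injective _ ?_, Finset.card_univ, Fintype.card_fin]
    intro a b hab
    rcases Sym2.eq_iff.1 hab with ⟨h1, h2⟩ | ⟨h1, h2⟩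
    · exact Fin.castSucc_injective _ (hp h1)
    · have e1 : a.castSucc.val = b.succ.val := congrArg Fin.val (hp h1)
      have e2 : a.succ.val = b.castSucc.val := congrArg Fin.val (hp h2)
      simp at e1 e2
      omega
  have hcs : (starEdges ℓ p).card = Fintype.card V - (ℓ + 2) := by
    rw [starEdges, Finset.card_image_of_injOn ?_]
    · rw [Finset.card_sdiff_of_subset (Finset.subset_univ _), Finset.card_univ,
        Finset.card_image_of_injective _ hp, Finset.card_univ, Fintype.card_fin]
    · intro a ha b hb hab
      rcases Sym2.eq_iff.1 hab with ⟨h1, h2⟩ | ⟨h1, h2⟩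
      · exact h2
      · exfalso
        have hb' := Finset.mem_coe.1 hb
        rw [Finset.mem_sdiff] at hb'
        exact hb'.2 (mem_image_range.2 ⟨0, h1⟩)
  rw [forced, Finset.card_union_of_disjoint hdisj, hcp, hcs]
  omega

lemma scorpionTuple_iff (G : SimpleGraph V) (ℓ : ℕ) (p : Fin (ℓ + 2) → V) :
    ScorpionTuple G ℓ p ↔ Function.Injective p ∧
      ∀ u v : V, u ≠ v → (u ∈ Set.range p ∨ v ∈ Set.range p) →
        (G.Adj u v ↔ s(u, v) ∈ forced ℓ p) := by
  constructor
  · rintro ⟨hp, hpath, hstar, hleg⟩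
    refine ⟨hp, ?_⟩
    intro u v huv hrange
    by_cases hu : u ∈ Set.range p
    · obtain ⟨i, rfl⟩ := hu
      by_cases hv : v ∈ Set.range p
      · obtain ⟨j, rfl⟩ := hv
        rw [hpath i j, mem_forced_pair hp]
      · rw [mem_forced_leg hp i hv]
        constructor
        · intro hadj
          by_contra hi
          exact hleg i hi v hv hadj
        · rintro rfl; exact hstar v hv
    · rcases hrange with hu' | hv
      · exact absurd hu' hu
      · obtain ⟨j, rfl⟩ := hv
        rw [Sym2.eq_swap, mem_forced_leg hp j hu, G.adj_comm]
        constructor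
        · intro hadj
          by_contra hj
          exact hleg j hj u hu hadj
        · rintro rfl; exact hstar u hu
  · rintro ⟨hp, hiff⟩
    refine ⟨hp, ?_, ?_, ?_⟩
    · intro i j
      by_cases hij : i = j
      · subst hij
        simp only [SimpleGraph.irrefl, false_iff]
        omega
      · rw [hiff (p i) (p j) (fun h => hij (hp h)) (Or.inl ⟨i, rfl⟩),
          mem_forced_pair hp]
    · intro v hv
      exact (hiff (p 0) v (fun h => hv ⟨0, h⟩) (Or.inl ⟨0, rfl⟩)).2
        ((mem_forced_leg hp 0 hv).2 rfl)
    · intro i hi v hv hadj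
      have := (hiff (p i) v (fun h => hv ⟨i, h⟩) (Or.inl ⟨i, rfl⟩)).1 hadj
      exact hi ((mem_forced_leg hp i hv).1 this)

lemma scorpionTuple_fromEdgeSet_iff {S : Finset (Sym2 V)}
    (hS : ∀ e ∈ S, ¬ e.IsDiag) (ℓ : ℕ) (p : Fin (ℓ + 2) → V) :
    ScorpionTuple (SimpleGraph.fromEdgeSet (↑S : Set (Sym2 V))) ℓ p ↔
      Function.Injective p ∧ forced ℓ p ⊆ S ∧
        ∀ e ∈ S, e ∈ forced ℓ p ∨ ∀ v ∈ e, v ∉ Set.range p := by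
  rw [scorpionTuple_iff]
  constructor
  · rintro ⟨hp, hiff⟩
    refine ⟨hp, ?_, ?_⟩
    · intro e he
      induction e using Sym2.ind with
      | _ u v =>
        have huv : u ≠ v := fun h => forced_not_isDiag hp _ he (by simp [h])
        have hr := forced_endpoint_range he
        have := (hiff u v huv hr).2 he
        rw [SimpleGraph.fromEdgeSet_adj] at this
        exact this.1
    · intro e he
      induction e using Sym2.ind with
      | _ u v =>
        have huv : u ≠ v := by
          intro h; exact hS _ he (by simp [h])
        by_cases hr : u ∈ Set.range p ∨ v ∈ Set.range p
        · left
          exact (hiff u v huv hr).1 (SimpleGraph.fromEdgeSet_adj _ |>.2 ⟨he, huv⟩)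
        · right
          push_neg at hr
          intro w hw
          rcases Sym2.mem_iff.1 hw with rfl | rfl
          · exact hr.1
          · exact hr.2
  · rintro ⟨hp, hsub, hlegs⟩
    refine ⟨hp, ?_⟩
    intro u v huv hrange
    rw [SimpleGraph.fromEdgeSet_adj]
    constructor
    · rintro ⟨he, -⟩
      rcases hlegs _ he with h | h
      · exact h
      · exfalso
        rcases hrange with hu | hv
        · exact h u (Sym2.mem_mk_left u v) hu
        · exact h v (Sym2.mem_mk_right u v) hv
    · intro h
      exact ⟨hsub h, huv⟩

lemma unique_witness {G : SimpleGraph V} {ℓ : ℕ} (hl : 1 ≤ ℓ)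
    (hcard : ℓ + 4 ≤ Fintype.card V) {p q : Fin (ℓ + 2) → V}
    (hp : ScorpionTuple G ℓ p) (hq : ScorpionTuple G ℓ q) : p = q := by
  classical
  obtain ⟨hpi, hppath, hpstar, hpleg⟩ := hp
  obtain ⟨hqi, hqpath, hqstar, hqleg⟩ := hq
  set k := Fintype.card V with hkdef
  have degb : ∀ (r : Fin (ℓ + 2) → V), Function.Injective r →
      (∀ i j, G.Adj (r i) (r j) ↔ (i.val + 1 = j.val ∨ j.val + 1 = i.val)) →
      (∀ v, v ∉ Set.range r → G.Adj (r 0) v) →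
      (Finset.univ.filter (G.Adj (r 0))).card = k - (ℓ + 1) := by
    intro r hri hrpath hrstar
    have hset : Finset.univ.filter (G.Adj (r 0)) =
        insert (r 1) (Finset.univ \ Finset.univ.image r) := by
      ext v
      simp only [Finset.mem_filter, Finset.mem_univ, true_and, Finset.mem_insert,
        Finset.mem_sdiff]
      constructor
      · intro hadj
        by_cases hv : v ∈ Set.range r
        · obtain ⟨j, rfl⟩ := hv
          have hrel := (hrpath 0 j).1 hadj
          simp only [Fin.val_zero] at hrel
          left
          congr 1
          ext
          simp only [Fin.val_one]
          omega
        · right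
          exact fun h => hv (mem_image_range.1 h)
      · rintro (rfl | hv)
        · exact (hrpath 0 1).2 (Or.inl (by simp))
        · exact hrstar v (fun h => hv (mem_image_range.2 h))
    have hnotmem : r 1 ∉ Finset.univ \ Finset.univ.image r := by
      simp only [Finset.mem_sdiff, Finset.mem_univ, true_and, not_not]
      exact Finset.mem_image_of_mem r (Finset.mem_univ _)
    have hsd : (Finset.univ \ Finset.univ.image r).card = k - (ℓ + 2) := by
      rw [Finset.card_sdiff_of_subset (Finset.subset_univ _), Finset.card_univ,
        Finset.card_image_of_injective _ hri, Finset.card_univ, Fintype.card_fin]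
    have hk2 : ℓ + 2 ≤ k := by simpa using Fintype.card_le_of_injective r hri
    rw [hset, Finset.card_insert_of_notMem hnotmem, hsd]
    omega
  have hbound2 : ∀ j : Fin (ℓ + 2), j ≠ 0 →
      (Finset.univ.filter (G.Adj (p j))).card ≤ 2 := by
    intro j hj0
    have hj1 : 1 ≤ j.val := by
      rcases Nat.eq_zero_or_pos j.val with h | h
      · exact absurd (Fin.ext (by simpa using h)) hj0
      · exact h
    have hsub : ∀ v ∈ Finset.univ.filter (G.Adj (p j)),
        ∃ m : Fin (ℓ + 2), v = p m ∧ (m.val + 1 = j.val ∨ j.val + 1 = m.val) := by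
      intro v hv
      rw [Finset.mem_filter] at hv
      have hadj := hv.2
      have hvr : v ∈ Set.range p := by
        by_contra hvr
        exact hpleg j hj0 v hvr hadj
      obtain ⟨m, rfl⟩ := hvr
      have := (hppath j m).1 hadj
      exact ⟨m, rfl, this.symm⟩
    set a : Fin (ℓ + 2) := ⟨j.val - 1, by omega⟩ with ha
    by_cases hjtop : j.val + 1 < ℓ + 2
    · set b : Fin (ℓ + 2) := ⟨j.val + 1, hjtop⟩ with hb
      have hsub' : Finset.univ.filter (G.Adj (p j)) ⊆ insert (p a) {p b} := by
        intro v hv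
        obtain ⟨m, rfl, hrel⟩ := hsub v hv
        simp only [Finset.mem_insert, Finset.mem_singleton]
        rcases hrel with h | h
        · left; congr 1; ext; simp only [ha]; omega
        · right; congr 1; ext; simp only [hb]; omega
      calc (Finset.univ.filter (G.Adj (p j))).card
          ≤ (insert (p a) ({p b} : Finset V)).card := Finset.card_le_card hsub'
        _ ≤ 2 := le_trans (Finset.card_insert_le _ _) (by simp)
    · have hsub' : Finset.univ.filter (G.Adj (p j)) ⊆ {p a} := by
        intro v hv
        obtain ⟨m, rfl, hrel⟩ := hsub v hv
        simp only [Finset.mem_singleton]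
        have hmlt := m.isLt
        rcases hrel with h | h
        · congr 1; ext; simp only [ha]; omega
        · omega
      calc (Finset.univ.filter (G.Adj (p j))).card
          ≤ ({p a} : Finset V).card := Finset.card_le_card hsub'
        _ ≤ 2 := by simp
  have hq0 : q 0 = p 0 := by
    by_contra hne
    have hdq : (Finset.univ.filter (G.Adj (q 0))).card = k - (ℓ + 1) :=
      degb q hqi hqpath hqstar
    by_cases hA : q 0 ∈ Set.range p
    · obtain ⟨j, hj⟩ := hA
      have hj0 : j ≠ 0 := by
        rintro rfl
        exact hne hj.symm
      have hb2 := hbound2 j hj0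
      rw [hj, hdq] at hb2
      omega
    · have hsubB : Finset.univ.filter (G.Adj (q 0)) ⊆
          insert (p 0) ((Finset.univ \ Finset.univ.image p).erase (q 0)) := by
        intro v hv
        rw [Finset.mem_filter] at hv
        have hadj := hv.2
        by_cases hvr : v ∈ Set.range p
        · obtain ⟨m, rfl⟩ := hvr
          have hm : m = 0 := by
            by_contra hm
            exact hpleg m hm (q 0) hA hadj.symm
          subst hm
          exact Finset.mem_insert_self _ _
        · refine Finset.mem_insert_of_mem (Finset.mem_erase.2 ⟨hadj.ne', ?_⟩)
          exact Finset.mem_sdiff.2 ⟨Finset.mem_univ _, fun h => hvr (mem_image_range.1 h)⟩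
      have hq0mem : q 0 ∈ Finset.univ \ Finset.univ.image p := by
        exact Finset.mem_sdiff.2 ⟨Finset.mem_univ _, fun h => hA (mem_image_range.1 h)⟩
      have hsd : (Finset.univ \ Finset.univ.image p).card = k - (ℓ + 2) := by
        rw [Finset.card_sdiff_of_subset (Finset.subset_univ _), Finset.card_univ,
          Finset.card_image_of_injective _ hpi, Finset.card_univ, Fintype.card_fin]
      have hcb : (Finset.univ.filter (G.Adj (q 0))).card ≤
          ((Finset.univ \ Finset.univ.image p).erase (q 0)).card + 1 :=
        le_trans (Finset.card_le_card hsubB) (Finset.card_insert_le _ _)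
      rw [Finset.card_erase_of_mem hq0mem, hsd, hdq] at hcb
      omega
  have key : ∀ n, ∀ hn : n < ℓ + 2, q ⟨n, hn⟩ = p ⟨n, hn⟩ := by
    intro n
    induction n using Nat.strong_induction_on with
    | _ n IH =>
      intro hn
      rcases n with _ | n
      · have h0 : (0 : Fin (ℓ + 2)) = ⟨0, hn⟩ := by ext; simp
        rw [← h0]
        exact hq0
      rcases n with _ | m
      · -- n = 1
        set i1 : Fin (ℓ + 2) := ⟨1, hn⟩ with hi1
        have hadj : G.Adj (q 0) (q i1) := (hqpath 0 i1).2 (Or.inl (by simp [hi1]))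
        rw [hq0] at hadj
        have hr : q i1 ∈ Set.range p := by
          by_contra hr
          have h2lt : 2 < ℓ + 2 := by omega
          set i2 : Fin (ℓ + 2) := ⟨2, h2lt⟩ with hi2
          have hadj12 : G.Adj (q i1) (q i2) :=
            (hqpath i1 i2).2 (Or.inl (by simp [hi1, hi2]))
          have hnadj02 : ¬ G.Adj (q 0) (q i2) := by
            rw [hqpath]
            simp [hi2]
          by_cases hr2 : q i2 ∈ Set.range p
          · obtain ⟨m, hm⟩ := hr2
            have hm0 : m ≠ 0 := by
              rintro rfl
              have hqq : q i2 = q 0 := by rw [← hm, hq0]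
              have := hqi hqq
              simp [hi2, Fin.ext_iff] at this
            exact hpleg m hm0 (q i1) hr (by rw [hm]; exact hadj12.symm)
          · exact hnadj02 (by rw [hq0]; exact hpstar _ hr2)
        obtain ⟨j, hj⟩ := hr
        rw [← hj] at hadj
        have hrel := (hppath 0 j).1 hadj
        simp only [Fin.val_zero] at hrel
        have hj1 : j = i1 := by
          ext
          simp only [hi1]
          omega
        rw [← hj, hj1]
      · -- n = m + 2
        have hm1lt : m + 1 < ℓ + 2 := by omega
        have hmlt : m < ℓ + 2 := by omega
        have h1 : q ⟨m + 1, hm1lt⟩ = p ⟨m + 1, hm1lt⟩ := IH (m + 1) (by omega) hm1lt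
        have h0 : q ⟨m, hmlt⟩ = p ⟨m, hmlt⟩ := IH m (by omega) hmlt
        set im1 : Fin (ℓ + 2) := ⟨m + 1, hm1lt⟩ with him1
        set i : Fin (ℓ + 2) := ⟨m + 2, hn⟩ with hii
        have hadj : G.Adj (q im1) (q i) :=
          (hqpath im1 i).2 (Or.inl (by simp [him1, hii]))
        rw [h1] at hadj
        have him10 : im1 ≠ 0 := by simp [him1, Fin.ext_iff]
        have hr : q i ∈ Set.range p := by
          by_contra hr
          exact hpleg im1 him10 (q i) hr hadj
        obtain ⟨j, hj⟩ := hr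
        rw [← hj] at hadj
        have hrel := (hppath im1 j).1 hadj
        simp only [him1] at hrel
        have hcases : j.val = m + 2 ∨ j.val = m := by omega
        rcases hcases with hc | hc
        · have hji : j = i := by ext; simp only [hii]; omega
          rw [← hj, hji]
        · exfalso
          have hjm : j = ⟨m, hmlt⟩ := by ext; simp only []; omega
          have : q i = q ⟨m, hmlt⟩ := by rw [← hj, hjm, ← h0]
          have := hqi this
          simp [hii, Fin.ext_iff] at this
  funext i
  have := key i.val i.isLt
  simpa using this.symm

variable (H : SimpleGraph V) [DecidableRel H.Adj]

open Classical in
noncomputable def LL (ℓ : ℕ) (p : Fin (ℓ + 2) → V) : Finset (Sym2 V) :=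
  H.edgeFinset.filter (fun e => ∀ v ∈ e, v ∉ Set.range p)

open Classical in
noncomputable def Wgood (ℓ : ℕ) : Finset (Fin (ℓ + 2) → V) :=
  Finset.univ.filter (fun p => Function.Injective p ∧ forced ℓ p ⊆ H.edgeFinset)

open Classical in
noncomputable def blocks (ℓ : ℕ) (p : Fin (ℓ + 2) → V) : Finset (Finset (Sym2 V)) :=
  (LL H ℓ p).powerset.image (fun T => forced ℓ p ∪ T)

lemma mem_LL {ℓ : ℕ} {p : Fin (ℓ + 2) → V} {e : Sym2 V} :
    e ∈ LL H ℓ p ↔ e ∈ H.edgeFinset ∧ ∀ v ∈ e, v ∉ Set.range p := by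
  simp [LL]

lemma disjoint_forced_LL {ℓ : ℕ} {p : Fin (ℓ + 2) → V} :
    Disjoint (forced ℓ p) (LL H ℓ p) := by
  rw [Finset.disjoint_left]
  intro e he hLL
  have hlegs := (mem_LL H).1 hLL |>.2
  induction e using Sym2.ind with
  | _ u v =>
    rcases forced_endpoint_range he with h | h
    · exact hlegs u (Sym2.mem_mk_left u v) h
    · exact hlegs v (Sym2.mem_mk_right u v) h

lemma nondiag_of_subset {S : Finset (Sym2 V)} (hS : S ⊆ H.edgeFinset) :
    ∀ e ∈ S, ¬ e.IsDiag := fun e he =>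
  (SimpleGraph.not_isDiag_of_mem_edgeSet H (SimpleGraph.mem_edgeFinset.1 (hS he)))

lemma mem_blocks_subset_scorpion {ℓ : ℕ} {p : Fin (ℓ + 2) → V}
    (hp : p ∈ Wgood H ℓ) {S : Finset (Sym2 V)} (hS : S ∈ blocks H ℓ p) :
    S ⊆ H.edgeFinset ∧ ScorpionTuple (SimpleGraph.fromEdgeSet (↑S : Set (Sym2 V))) ℓ p := by
  rw [Wgood, Finset.mem_filter] at hp
  obtain ⟨-, hpi, hsub⟩ := hp
  rw [blocks, Finset.mem_image] at hS
  obtain ⟨T, hT, rfl⟩ := hS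
  rw [Finset.mem_powerset] at hT
  have hSsub : forced ℓ p ∪ T ⊆ H.edgeFinset :=
    Finset.union_subset hsub (hT.trans (Finset.filter_subset _ _))
  refine ⟨hSsub, (scorpionTuple_fromEdgeSet_iff (nondiag_of_subset H hSsub) ℓ p).2
    ⟨hpi, Finset.subset_union_left, ?_⟩⟩
  intro e he
  rcases Finset.mem_union.1 he with h | h
  · exact Or.inl h
  · exact Or.inr (((mem_LL H).1 (hT h)).2)

open Classical in
lemma filter_scorpion_eq (ℓ : ℕ) :
    (H.edgeFinset.powerset.filter
        (fun S : Finset (Sym2 V) => IsScorpion (SimpleGraph.fromEdgeSet (↑S : Set (Sym2 V))) ℓ))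
      = (Wgood H ℓ).biUnion (blocks H ℓ) := by
  classical
  ext S
  rw [Finset.mem_filter, Finset.mem_powerset, Finset.mem_biUnion]
  constructor
  · rintro ⟨hSsub, pw, hpt⟩
    have hnd := nondiag_of_subset H hSsub
    rw [scorpionTuple_fromEdgeSet_iff hnd] at hpt
    obtain ⟨hpi, hsub, hlegs⟩ := hpt
    refine ⟨pw, ?_, ?_⟩
    · rw [Wgood, Finset.mem_filter]
      exact ⟨Finset.mem_univ _, hpi, hsub.trans hSsub⟩
    · rw [blocks, Finset.mem_image]
      refine ⟨S \ forced ℓ pw, ?_, Finset.union_sdiff_of_subset hsub⟩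
      rw [Finset.mem_powerset]
      intro e he
      rw [Finset.mem_sdiff] at he
      rcases hlegs e he.1 with h | h
      · exact absurd h he.2
      · exact (mem_LL H).2 ⟨hSsub he.1, h⟩
  · rintro ⟨pw, hpw, hS⟩
    obtain ⟨hSsub, hpt⟩ := mem_blocks_subset_scorpion H hpw hS
    exact ⟨hSsub, pw, hpt⟩

lemma blocks_pairwiseDisjoint {ℓ : ℕ} (hl : 1 ≤ ℓ) (hcard : ℓ + 4 ≤ Fintype.card V) :
    (↑(Wgood H ℓ) : Set (Fin (ℓ + 2) → V)).PairwiseDisjoint (blocks H ℓ) := by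
  intro p hp q hq hne
  simp only [Function.onFun]
  rw [Finset.disjoint_left]
  intro S hSp hSq
  have h1 := (mem_blocks_subset_scorpion H (Finset.mem_coe.1 hp) hSp).2
  have h2 := (mem_blocks_subset_scorpion H (Finset.mem_coe.1 hq) hSq).2
  exact hne (unique_witness hl hcard h1 h2)

lemma sum_over_block {ℓ : ℕ} {p : Fin (ℓ + 2) → V} (hp : p ∈ Wgood H ℓ) :
    ∑ S ∈ blocks H ℓ p, (-1 : ℤ) ^ S.card
      = (-1 : ℤ) ^ (Fintype.card V - 1) * (if LL H ℓ p = ∅ then 1 else 0) := by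
  classical
  rw [Wgood, Finset.mem_filter] at hp
  obtain ⟨-, hpi, -⟩ := hp
  have hdisj : ∀ T ∈ (LL H ℓ p).powerset, Disjoint (forced ℓ p) T := fun T hT =>
    (disjoint_forced_LL H).mono_right (Finset.mem_powerset.1 hT)
  have hinj : ∀ T ∈ (LL H ℓ p).powerset, ∀ T' ∈ (LL H ℓ p).powerset,
      forced ℓ p ∪ T = forced ℓ p ∪ T' → T = T' := by
    intro T hT T' hT' h
    have e1 := Finset.union_sdiff_cancel_left (hdisj T hT)
    have e2 := Finset.union_sdiff_cancel_left (hdisj T' hT')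
    rw [← e1, ← e2, h]
  rw [blocks, Finset.sum_image hinj]
  have hcongr : ∀ T ∈ (LL H ℓ p).powerset,
      (-1 : ℤ) ^ (forced ℓ p ∪ T).card
        = (-1 : ℤ) ^ (Fintype.card V - 1) * (-1 : ℤ) ^ T.card := by
    intro T hT
    rw [Finset.card_union_of_disjoint (hdisj T hT), card_forced hpi, pow_add]
  rw [Finset.sum_congr rfl hcongr, ← Finset.mul_sum,
    Finset.sum_powerset_neg_one_pow_card]

open Classical in
lemma total_sum {ℓ : ℕ} (hl : 1 ≤ ℓ) (hcard : ℓ + 4 ≤ Fintype.card V) :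
    (∑ S ∈ H.edgeFinset.powerset, (-1 : ℤ) ^ S.card *
        (if IsScorpion (SimpleGraph.fromEdgeSet (↑S : Set (Sym2 V))) ℓ then 1 else 0))
      = (-1 : ℤ) ^ (Fintype.card V - 1) *
          (((Wgood H ℓ).filter (fun p => LL H ℓ p = ∅)).card : ℤ) := by
  have h1 : (∑ S ∈ H.edgeFinset.powerset, (-1 : ℤ) ^ S.card *
      (if IsScorpion (SimpleGraph.fromEdgeSet (↑S : Set (Sym2 V))) ℓ then 1 else 0))
      = ∑ S ∈ H.edgeFinset.powerset.filter
          (fun S : Finset (Sym2 V) =>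
            IsScorpion (SimpleGraph.fromEdgeSet (↑S : Set (Sym2 V))) ℓ),
          (-1 : ℤ) ^ S.card := by
    rw [Finset.sum_filter]
    refine Finset.sum_congr rfl fun S _ => ?_
    by_cases h : IsScorpion (SimpleGraph.fromEdgeSet (↑S : Set (Sym2 V))) ℓ <;>
      simp [h]
  rw [h1, filter_scorpion_eq, Finset.sum_biUnion (blocks_pairwiseDisjoint H hl hcard),
    Finset.sum_congr rfl (fun p hp => sum_over_block H hp), ← Finset.mul_sum,
    Finset.sum_boole]

lemma fossil_iff {ℓ : ℕ} :
    (∃ p, p ∈ Wgood H ℓ ∧ LL H ℓ p = ∅) ↔ IsScorpionFossil H ℓ := by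
  constructor
  · rintro ⟨p, hpW, hLL⟩
    rw [Wgood, Finset.mem_filter] at hpW
    obtain ⟨-, hpi, hsub⟩ := hpW
    refine ⟨SimpleGraph.fromEdgeSet (↑(forced ℓ p) : Set (Sym2 V)), p, ⟨?_, ?_⟩, ?_, ?_⟩
    · exact (scorpionTuple_fromEdgeSet_iff (forced_not_isDiag hpi) ℓ p).2
        ⟨hpi, subset_rfl, fun e he => Or.inl he⟩
    · intro u v hu hv hadj
      rw [SimpleGraph.fromEdgeSet_adj] at hadj
      exact notMem_forced_legs hu hv (Finset.mem_coe.1 hadj.1)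
    · intro u v hadj
      rw [SimpleGraph.fromEdgeSet_adj] at hadj
      exact (SimpleGraph.mem_edgeSet _).1
        (SimpleGraph.mem_edgeFinset.1 (hsub (Finset.mem_coe.1 hadj.1)))
    · intro u v hadj
      by_cases hu : u ∈ Set.range p
      · exact Or.inr (Or.inl hu)
      by_cases hv : v ∈ Set.range p
      · exact Or.inr (Or.inr hv)
      exfalso
      have : s(u, v) ∈ LL H ℓ p := by
        refine (mem_LL H).2 ⟨SimpleGraph.mem_edgeFinset.2 ((SimpleGraph.mem_edgeSet _).2 hadj), ?_⟩
        intro w hw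
        rcases Sym2.mem_iff.1 hw with rfl | rfl
        · exact hu
        · exact hv
      rw [hLL] at this
      exact Finset.notMem_empty _ this
  · rintro ⟨Sk, p, ⟨hpt, hskel⟩, hle, hcover⟩
    have hpi := hpt.1
    refine ⟨p, ?_, ?_⟩
    · rw [Wgood, Finset.mem_filter]
      refine ⟨Finset.mem_univ _, hpi, ?_⟩
      intro e he
      rcases Finset.mem_union.1 he with h | h
      · obtain ⟨a, ha⟩ := mem_pathEdges.1 h
        have hadj : Sk.Adj (p a.castSucc) (p a.succ) :=
          (hpt.2.1 a.castSucc a.succ).2 (Or.inl (by simp))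
        rw [← ha]
        exact SimpleGraph.mem_edgeFinset.2 ((SimpleGraph.mem_edgeSet _).2 (hle hadj))
      · obtain ⟨v, hv, heq⟩ := mem_starEdges.1 h
        have hadj : Sk.Adj (p 0) v := hpt.2.2.1 v hv
        rw [← heq]
        exact SimpleGraph.mem_edgeFinset.2 ((SimpleGraph.mem_edgeSet _).2 (hle hadj))
    · rw [Finset.eq_empty_iff_forall_notMem]
      intro e
      induction e using Sym2.ind with
      | _ u v =>
        intro he
        obtain ⟨hE, hlegs⟩ := (mem_LL H).1 he
        have hadj : H.Adj u v := (SimpleGraph.mem_edgeSet _).1 (SimpleGraph.mem_edgeFinset.1 hE)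
        have hu : u ∉ Set.range p := hlegs u (Sym2.mem_mk_left u v)
        have hv : v ∉ Set.range p := hlegs v (Sym2.mem_mk_right u v)
        rcases hcover u v hadj with h | h | h
        · exact hskel u v hu hv h
        · exact hu h
        · exact hv h

end ScorpionAux

open Classical in
/-- The alternating enumerator of the `ℓ`-scorpion property at a graph `H` on
`k ≥ ℓ+4` vertices is nonzero if and only if `H` is an `ℓ`-scorpion fossil. -/
theorem stmt_14 {V : Type*} [Fintype V] [DecidableEq V] (H : SimpleGraph V)
    [DecidableRel H.Adj] (ℓ : ℕ) (hl : 1 ≤ ℓ) (hcard : ℓ + 4 ≤ Fintype.card V) :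
    ((-1 : ℤ) ^ H.edgeFinset.card *
        ∑ S ∈ H.edgeFinset.powerset, (-1 : ℤ) ^ S.card *
          (if IsScorpion (SimpleGraph.fromEdgeSet (↑S : Set (Sym2 V))) ℓ then 1 else 0)) ≠ 0
      ↔ IsScorpionFossil H ℓ := by
  classical
  rw [ScorpionAux.total_sum H hl hcard]
  rw [mul_ne_zero_iff, mul_ne_zero_iff]
  constructor
  · rintro ⟨-, -, hN⟩
    have : ((ScorpionAux.Wgood H ℓ).filter
        (fun p => ScorpionAux.LL H ℓ p = ∅)).Nonempty := by
      rw [Finset.nonempty_iff_ne_empty]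
      intro h0
      rw [h0] at hN
      simp at hN
    obtain ⟨p, hp⟩ := this
    rw [Finset.mem_filter] at hp
    exact (ScorpionAux.fossil_iff H).1 ⟨p, hp.1, hp.2⟩
  · intro hf
    obtain ⟨p, hpW, hLL⟩ := (ScorpionAux.fossil_iff H).2 hf
    refine ⟨pow_ne_zero _ (by norm_num), pow_ne_zero _ (by norm_num), ?_⟩
    have hmem : p ∈ (ScorpionAux.Wgood H ℓ).filter
        (fun p => ScorpionAux.LL H ℓ p = ∅) := Finset.mem_filter.2 ⟨hpW, hLL⟩
    have := Finset.card_ne_zero_of_mem hmem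
    exact_mod_cast this
end
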